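/- arXiv:2509.03815 — 2 statements merged into one kernel-verified Lean document; each statement's English description precedes it below -/
import Mathlib

section
/- Let G be a simple graph on a vertex set V and let C₁, C₂ be finite sets of edges of G satisfying the consistency assumption: for all C₁' ⊆ C₁ and C₂' ⊆ C₂, if ∂C₁' = ∂C₂' then C₁' = C₂'. Then for every nonempty subset D' ⊆ C₁ Δ C₂ one has ∂D' ≠ ∅; that is, every nonempty set of edges contained in the symmetric difference of C₁ and C₂ has at least one vertex incident to an odd number of its edges. -/
/-- The boundary of a finite set of edges `C`: the set of vertices incident to an
odd number of edges of `C`. -/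
def boundary {V : Type*} [DecidableEq V] (C : Finset (Sym2 V)) : Set V :=
  {v : V | Odd (C.filter (fun e => v ∈ e)).card}

/-- Under the consistency assumption on the pair `(C₁, C₂)`, every nonempty subset of the
symmetric difference `C₁ Δ C₂` has a nonempty boundary. -/
theorem boundary_ne_empty_of_consistent {V : Type*} [DecidableEq V] (G : SimpleGraph V)
    (C₁ C₂ : Finset (Sym2 V)) (h₁ : ↑C₁ ⊆ G.edgeSet) (h₂ : ↑C₂ ⊆ G.edgeSet)
    (hconsistent : ∀ C₁' ⊆ C₁, ∀ C₂' ⊆ C₂, boundary C₁' = boundary C₂' → C₁' = C₂') :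
    ∀ D' ⊆ symmDiff C₁ C₂, D'.Nonempty → boundary D' ≠ ∅ := by
  intro D' hD hne hbd
  set A := D' ∩ C₁ with hA
  set B := D' ∩ C₂ with hB
  have hdisj : Disjoint A B := by
    rw [Finset.disjoint_left]
    intro e heA heB
    have := hD (Finset.mem_inter.mp heA).1
    rw [Finset.mem_symmDiff] at this
    rcases this with ⟨_, h⟩ | ⟨_, h⟩
    · exact h (Finset.mem_inter.mp heB).2
    · exact h (Finset.mem_inter.mp heA).2
  have hunion : A ∪ B = D' := by
    ext e
    simp only [hA, hB, Finset.mem_union, Finset.mem_inter]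
    constructor
    · rintro (⟨h, _⟩ | ⟨h, _⟩) <;> exact h
    · intro he
      have := hD he
      rw [Finset.mem_symmDiff] at this
      rcases this with ⟨h, _⟩ | ⟨h, _⟩
      · exact Or.inl ⟨he, h⟩
      · exact Or.inr ⟨he, h⟩
  have hAB : boundary A = boundary B := by
    ext v
    have hv : v ∉ boundary D' := by rw [hbd]; exact Set.notMem_empty v
    simp only [boundary, Set.mem_setOf_eq] at hv ⊢
    have hcard : (D'.filter (fun e => v ∈ e)).card =
        (A.filter (fun e => v ∈ e)).card + (B.filter (fun e => v ∈ e)).card := by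
      rw [← hunion, Finset.filter_union,
        Finset.card_union_of_disjoint (Finset.disjoint_filter_filter hdisj)]
    rw [Nat.not_odd_iff_even, hcard, Nat.even_add] at hv
    rw [← Nat.not_even_iff_odd, ← Nat.not_even_iff_odd, not_iff_not, hv]
  have hABeq : A = B := hconsistent A Finset.inter_subset_right B Finset.inter_subset_right hAB
  have hAe : A = ∅ := (Finset.disjoint_self_iff_empty A).mp (hABeq ▸ hdisj)
  have hBe : B = ∅ := hABeq ▸ hAe
  rw [hAe, hBe, Finset.empty_union] at hunion
  exact hne.ne_empty hunion.symm
end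

section
/- (Theorem A.1: minimum weight to produce a non-trivial seam syndrome.) Let G be a simple graph on a vertex set V with an edge weight function w assigning a nonnegative real number to each edge. Let O ⊆ V (the overlap region of two adjacent decoding windows), let v ∈ O (a seam detection event), and let w_b ≥ 0 (the weighted buffer size) be such that every walk in G from v to any vertex u ∉ O has total edge weight at least w_b. Let C₁, C₂ be finite edge sets (the corrections output in the two windows) satisfying: (i) the consistency assumption: for all C₁' ⊆ C₁ and C₂' ⊆ C₂, if ∂C₁' = ∂C₂' then C₁' = C₂'; (ii) ∂C₁ ∩ O = ∂C₂ ∩ O; and (iii) some edge of C₁ Δ C₂ is incident to v. Then w(C₁) ≥ w_b/2 or w(C₂) ≥ w_b/2. Moreover, if 𝓔₁ and 𝓔₂ are finite edge sets (physical error configurations) with w(C₁) ≤ w(𝓔₁) and w(C₂) ≤ w(𝓔₂) (as holds when each Cᵢ is a minimum-weight correction for the syndrome of 𝓔ᵢ), then w(𝓔₁) ≥ w_b/2 or w(𝓔₂) ≥ w_b/2. -/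
lemma aux_card_symmDiff {α : Type*} [DecidableEq α] (A B : Finset α) :
    (symmDiff A B).card + 2 * (A ∩ B).card = A.card + B.card := by
  classical
  have h1 : symmDiff A B = (A \ B) ∪ (B \ A) := by
    ext x; simp [Finset.mem_symmDiff]
  have hd : Disjoint (A \ B) (B \ A) := by
    simp [Finset.disjoint_left (s := A \ B)]; tauto
  have h2 : (A \ B).card + (A ∩ B).card = A.card := by
    rw [← Finset.sdiff_inter_self_left A B]
    exact Finset.card_sdiff_add_card_eq_card Finset.inter_subset_left
  have h3 : (B \ A).card + (A ∩ B).card = B.card := by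
    rw [← Finset.sdiff_inter_self_left B A, Finset.inter_comm B A]
    exact Finset.card_sdiff_add_card_eq_card (by rw [Finset.inter_comm]; exact Finset.inter_subset_left)
  rw [h1, Finset.card_union_of_disjoint hd]
  omega

lemma aux_walk_countP {V : Type*} [DecidableEq V] {G : SimpleGraph V}
    {a b : V} (p : G.Walk a b) (x : V) :
    (p.edges.countP (fun e => x ∈ e)) % 2
      = ((if x = a then 1 else 0) + (if x = b then 1 else 0)) % 2 := by
  induction p with
  | nil => rw [SimpleGraph.Walk.edges_nil, List.countP_nil]; split <;> simp
  | @cons u c d h p ih =>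
    have hne : u ≠ c := h.ne
    rw [SimpleGraph.Walk.edges_cons, List.countP_cons]
    rcases eq_or_ne x u with rfl | hxu <;> rcases eq_or_ne x c with rfl | hxc <;>
      rcases eq_or_ne x d with rfl | hxd <;>
      simp_all [Sym2.mem_iff] <;> omega

lemma aux_countP_toFinset {α : Type*} [DecidableEq α] {l : List α} (h : l.Nodup)
    (q : α → Prop) [DecidablePred q] :
    l.countP (fun a => q a) = (l.toFinset.filter q).card := by
  rw [List.countP_eq_length_filter, ← List.toFinset_card_of_nodup (h.filter _)]
  congr 1
  ext a
  simp

lemma aux_seam_key {V : Type*} [DecidableEq V]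
    (G : SimpleGraph V) (w : Sym2 V → ℝ) (hw : ∀ e ∈ G.edgeSet, 0 ≤ w e)
    (O : Set V) (v : V) (hv : v ∈ O) (w_b : ℝ) (hwb : 0 ≤ w_b)
    (hbuffer : ∀ u : V, u ∉ O → ∀ q : G.Walk v u, w_b ≤ (q.edges.map w).sum)
    (C₁ C₂ : Finset (Sym2 V)) (h₁ : ↑C₁ ⊆ G.edgeSet) (h₂ : ↑C₂ ⊆ G.edgeSet)
    (hconsistent : ∀ C₁' ⊆ C₁, ∀ C₂' ⊆ C₂, boundary C₁' = boundary C₂' → C₁' = C₂')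
    (hagree : boundary C₁ ∩ O = boundary C₂ ∩ O)
    (hseam : ∃ e ∈ symmDiff C₁ C₂, v ∈ e) :
    w_b ≤ (∑ e ∈ C₁, w e) + ∑ e ∈ C₂, w e := by
  classical
  set D := symmDiff C₁ C₂ with hD
  have hDmem : ∀ e, e ∈ D ↔ (e ∈ C₁ ∧ e ∉ C₂) ∨ (e ∈ C₂ ∧ e ∉ C₁) :=
    fun e => Finset.mem_symmDiff
  have hDG : ∀ e ∈ D, e ∈ G.edgeSet := by
    intro e he
    rcases (hDmem e).1 he with ⟨h, _⟩ | ⟨h, _⟩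
    · exact h₁ h
    · exact h₂ h
  -- D has no nonempty "even" subset
  have hno : ∀ Z ⊆ D, (∀ x : V, ¬ Odd ((Z.filter (fun e => x ∈ e)).card)) → Z = ∅ := by
    intro Z hZ hev
    have hdisj : ∀ x : V, Disjoint ((Z ∩ C₁).filter (fun e => x ∈ e))
        ((Z ∩ C₂).filter (fun e => x ∈ e)) := by
      intro x
      rw [Finset.disjoint_left]
      intro e he1 he2
      simp only [Finset.mem_filter, Finset.mem_inter] at he1 he2
      rcases (hDmem e).1 (hZ he1.1.1) with ⟨_, h⟩ | ⟨_, h⟩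
      · exact h he2.1.2
      · exact h he1.1.2
    have hsplit : ∀ x : V, (Z.filter (fun e => x ∈ e)).card
        = ((Z ∩ C₁).filter (fun e => x ∈ e)).card + ((Z ∩ C₂).filter (fun e => x ∈ e)).card := by
      intro x
      rw [← Finset.card_union_of_disjoint (hdisj x)]
      congr 1
      ext e
      simp only [Finset.mem_union, Finset.mem_filter, Finset.mem_inter]
      constructor
      · rintro ⟨heZ, hx⟩
        rcases (hDmem e).1 (hZ heZ) with ⟨h, _⟩ | ⟨h, _⟩
        · exact Or.inl ⟨⟨heZ, h⟩, hx⟩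
        · exact Or.inr ⟨⟨heZ, h⟩, hx⟩
      · rintro (⟨⟨heZ, _⟩, hx⟩ | ⟨⟨heZ, _⟩, hx⟩) <;> exact ⟨heZ, hx⟩
    have hbd : boundary (Z ∩ C₁) = boundary (Z ∩ C₂) := by
      ext x
      have h1 := hev x
      rw [hsplit x] at h1
      simp only [boundary, Set.mem_setOf_eq, Nat.odd_iff] at *
      omega
    have heq := hconsistent (Z ∩ C₁) Finset.inter_subset_right (Z ∩ C₂)
      Finset.inter_subset_right hbd
    ext e
    simp only [Finset.notMem_empty, iff_false]
    intro heZ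
    rcases (hDmem e).1 (hZ heZ) with ⟨hc, hn⟩ | ⟨hc, hn⟩
    · have : e ∈ Z ∩ C₂ := heq ▸ Finset.mem_inter.mpr ⟨heZ, hc⟩
      exact hn (Finset.mem_inter.mp this).2
    · have : e ∈ Z ∩ C₁ := heq.symm ▸ Finset.mem_inter.mpr ⟨heZ, hc⟩
      exact hn (Finset.mem_inter.mp this).2
  -- boundary of D avoids O
  have hDO : ∀ x ∈ O, ¬ Odd ((D.filter (fun e => x ∈ e)).card) := by
    intro x hxO
    have hfil : D.filter (fun e => x ∈ e)
        = symmDiff (C₁.filter (fun e => x ∈ e)) (C₂.filter (fun e => x ∈ e)) := by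
      ext e
      simp only [Finset.mem_filter, hD, Finset.mem_symmDiff]
      tauto
    have hcard := aux_card_symmDiff (C₁.filter (fun e => x ∈ e)) (C₂.filter (fun e => x ∈ e))
    rw [← hfil] at hcard
    have hiff : x ∈ boundary C₁ ∩ O ↔ x ∈ boundary C₂ ∩ O := by rw [hagree]
    simp only [Set.mem_inter_iff, boundary, Set.mem_setOf_eq, hxO, and_true] at hiff
    intro hoddD
    simp only [Nat.odd_iff] at hoddD hiff
    by_cases hc : (C₁.filter (fun e => x ∈ e)).card % 2 = 1
    · have := hiff.mp hc; omega
    · have hc2 : ¬ (C₂.filter (fun e => x ∈ e)).card % 2 = 1 := fun h => hc (hiff.mpr h)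
      omega
  -- maximal trail from v inside D
  set S : Set ℕ := {n | ∃ u, ∃ p : G.Walk v u, p.IsTrail ∧ (∀ e ∈ p.edges, e ∈ D) ∧ p.length = n}
    with hS
  have hSne : S.Nonempty := ⟨0, v, SimpleGraph.Walk.nil, by simp, by simp, rfl⟩
  have hSbdd : BddAbove S := by
    refine ⟨D.card, ?_⟩
    rintro n ⟨u, p, ht, hsub, rfl⟩
    have hsub' : p.edges.toFinset ⊆ D := fun e he => hsub e (List.mem_toFinset.mp he)
    have hle := Finset.card_le_card hsub'
    rwa [List.toFinset_card_of_nodup ht.edges_nodup, SimpleGraph.Walk.length_edges] at hle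
  obtain ⟨u, p, ht, hsub, hlen⟩ := Nat.sSup_mem hSne hSbdd
  have hmax : sSup S + 1 ∉ S := fun hq => by have := le_csSup hSbdd hq; omega
  -- extension lemma
  have hext : ¬ ∃ e ∈ D, u ∈ e ∧ e ∉ p.edges := by
    rintro ⟨e, heD, hue, henp⟩
    obtain ⟨y, rfl⟩ := Sym2.mem_iff_exists.mp hue
    have hadj : G.Adj u y := G.mem_edgeSet.mp (hDG _ heD)
    refine hmax ⟨y, p.concat hadj, ⟨?_⟩, ?_, ?_⟩
    · rw [SimpleGraph.Walk.edges_concat, List.concat_eq_append]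
      simp [List.nodup_append, ht.edges_nodup, henp]
      exact fun a ha hEq => henp (hEq ▸ ha)
    · intro e' he'
      rw [SimpleGraph.Walk.edges_concat, List.concat_eq_append, List.mem_append] at he'
      rcases he' with h | h
      · exact hsub _ h
      · simp only [List.mem_singleton] at h; subst h; exact heD
    · rw [SimpleGraph.Walk.length_concat, hlen]
  have hcnt : ∀ x : V, (p.edges.toFinset.filter (fun e => x ∈ e)).card % 2
      = ((if x = v then 1 else 0) + (if x = u then 1 else 0)) % 2 := by
    intro x
    rw [← aux_countP_toFinset ht.edges_nodup]
    exact aux_walk_countP p x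
  have hsubf : ∀ x : V, p.edges.toFinset.filter (fun e => x ∈ e)
      ⊆ D.filter (fun e => x ∈ e) := by
    intro x e he
    simp only [Finset.mem_filter, List.mem_toFinset] at he ⊢
    exact ⟨hsub _ he.1, he.2⟩
  have hfind : ∀ x : V, (p.edges.toFinset.filter (fun e => x ∈ e)).card
      ≠ (D.filter (fun e => x ∈ e)).card → ∃ e ∈ D, x ∈ e ∧ e ∉ p.edges := by
    intro x hnecard
    have hss : p.edges.toFinset.filter (fun e => x ∈ e) ⊂ D.filter (fun e => x ∈ e) :=
      (Finset.ssubset_iff_subset_ne).mpr ⟨hsubf x, fun heq => hnecard (by rw [heq])⟩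
    obtain ⟨e, heD, henp⟩ := Finset.exists_of_ssubset hss
    simp only [Finset.mem_filter, List.mem_toFinset, not_and] at heD henp
    exact ⟨e, heD.1, heD.2, fun hmem => henp hmem heD.2⟩
  by_cases huO : u ∈ O
  · exfalso
    by_cases huv : u = v
    · subst huv
      by_cases hex : ∃ e ∈ D, u ∈ e ∧ e ∉ p.edges
      · exact hext hex
      · obtain ⟨e₀, he₀D, he₀v⟩ := hseam
        have he₀p : e₀ ∈ p.edges := by
          by_contra hc
          exact hex ⟨e₀, he₀D, he₀v, hc⟩
        have hZ : p.edges.toFinset = ∅ := by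
          apply hno _ (fun e he => hsub e (List.mem_toFinset.mp he))
          intro x
          have := hcnt x
          rw [Nat.odd_iff]
          rcases eq_or_ne x u with rfl | hxv
          · simp only [if_pos rfl] at this; omega
          · simp only [if_neg hxv] at this; omega
        rw [Finset.eq_empty_iff_forall_notMem] at hZ
        exact hZ e₀ (List.mem_toFinset.mpr he₀p)
    · -- u ≠ v, u ∈ O: parity mismatch gives extension
      have hodd : (p.edges.toFinset.filter (fun e => u ∈ e)).card % 2 = 1 := by
        have := hcnt u
        simp [huv] at this
        omega
      have heven := hDO u huO
      rw [Nat.odd_iff] at heven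
      exact hext (hfind u (by omega))
  · -- u ∉ O: the trail gives the weight bound
    have hwalk := hbuffer u huO p
    have hsum1 : (p.edges.map w).sum = ∑ e ∈ p.edges.toFinset, w e :=
      (List.sum_toFinset _ ht.edges_nodup).symm
    have hsub' : p.edges.toFinset ⊆ D := fun e he => hsub e (List.mem_toFinset.mp he)
    have hle2 : ∑ e ∈ p.edges.toFinset, w e ≤ ∑ e ∈ D, w e :=
      Finset.sum_le_sum_of_subset_of_nonneg hsub' (fun e he _ => hw e (hDG e he))
    have hle3 : ∑ e ∈ D, w e ≤ ∑ e ∈ C₁ ∪ C₂, w e := by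
      apply Finset.sum_le_sum_of_subset_of_nonneg
      · intro e he
        rcases (hDmem e).1 he with ⟨h, _⟩ | ⟨h, _⟩ <;> simp [h]
      · intro e he _
        apply hw
        rcases Finset.mem_union.mp he with h | h
        · exact h₁ h
        · exact h₂ h
    have hle4 : ∑ e ∈ C₁ ∪ C₂, w e ≤ (∑ e ∈ C₁, w e) + ∑ e ∈ C₂, w e := by
      have hui := Finset.sum_union_inter (s₁ := C₁) (s₂ := C₂) (f := w)
      have hnn : 0 ≤ ∑ e ∈ C₁ ∩ C₂, w e :=
        Finset.sum_nonneg (fun e he => hw e (h₁ (Finset.mem_inter.mp he).1))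
      linarith
    linarith

/-- Theorem A.1 (minimum weight to produce a non-trivial seam syndrome).
If every walk from the seam vertex `v ∈ O` to a vertex outside the overlap region `O` has
weight at least `w_b`, the two window corrections `C₁, C₂` satisfy the consistency
assumption and have boundaries agreeing on `O`, and some edge of `C₁ Δ C₂` is incident to
`v`, then `w(C₁) ≥ w_b/2` or `w(C₂) ≥ w_b/2`; moreover any physical error configurations
`𝓔₁, 𝓔₂` with `w(C₁) ≤ w(𝓔₁)` and `w(C₂) ≤ w(𝓔₂)` satisfy `w(𝓔₁) ≥ w_b/2` or
`w(𝓔₂) ≥ w_b/2`. -/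
theorem seam_syndrome_min_weight {V : Type*} [DecidableEq V]
    (G : SimpleGraph V) (w : Sym2 V → ℝ) (hw : ∀ e ∈ G.edgeSet, 0 ≤ w e)
    (O : Set V) (v : V) (hv : v ∈ O) (w_b : ℝ) (hwb : 0 ≤ w_b)
    (hbuffer : ∀ u : V, u ∉ O → ∀ q : G.Walk v u, w_b ≤ (q.edges.map w).sum)
    (C₁ C₂ : Finset (Sym2 V)) (h₁ : ↑C₁ ⊆ G.edgeSet) (h₂ : ↑C₂ ⊆ G.edgeSet)
    (hconsistent : ∀ C₁' ⊆ C₁, ∀ C₂' ⊆ C₂, boundary C₁' = boundary C₂' → C₁' = C₂')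
    (hagree : boundary C₁ ∩ O = boundary C₂ ∩ O)
    (hseam : ∃ e ∈ symmDiff C₁ C₂, v ∈ e) :
    (w_b / 2 ≤ ∑ e ∈ C₁, w e ∨ w_b / 2 ≤ ∑ e ∈ C₂, w e) ∧
      ∀ 𝓔₁ 𝓔₂ : Finset (Sym2 V),
        (∑ e ∈ C₁, w e) ≤ (∑ e ∈ 𝓔₁, w e) → (∑ e ∈ C₂, w e) ≤ (∑ e ∈ 𝓔₂, w e) →
          (w_b / 2 ≤ ∑ e ∈ 𝓔₁, w e ∨ w_b / 2 ≤ ∑ e ∈ 𝓔₂, w e) := by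
  have key := aux_seam_key G w hw O v hv w_b hwb hbuffer C₁ C₂ h₁ h₂ hconsistent hagree hseam
  constructor
  · by_contra hcon
    push_neg at hcon
    linarith [hcon.1, hcon.2]
  · intro 𝓔₁ 𝓔₂ hE1 hE2
    by_contra hcon
    push_neg at hcon
    linarith [hcon.1, hcon.2]
end
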